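/- Let M and N be finitely generated, semipositive binoids. Then for every positive integer q, #((M∧N)/[q](M∧N)₊) = #(M/[q]M₊) · #(N/[q]N₊). -/

import Mathlib

/-- A binoid: a commutative monoid (written additively) with an absorbing element `infty`. -/
class Binoid (N : Type*) extends AddCommMonoid N where
  infty : N
  add_infty : ∀ x : N, x + infty = infty

namespace Binoid

variable {N : Type*} [Binoid N]

theorem infty_add (x : N) : (infty : N) + x = infty := by
  rw [add_comm]; exact add_infty x

/-- `I ⊆ N` is an ideal of the binoid `N`. -/
def IsIdeal (I : Set N) : Prop :=
  (infty : N) ∈ I ∧ ∀ a ∈ I, ∀ n : N, n + a ∈ I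

/-- The ideal generated by a subset `S` of a binoid. -/
def span (S : Set N) : Set N :=
  insert (infty : N) {x : N | ∃ n : N, ∃ s ∈ S, x = n + s}

/-- The `q`-th Frobenius sum `[q]I` of an ideal: the ideal generated by `{q • a | a ∈ I}`. -/
def frob (q : ℕ) (I : Set N) : Set N :=
  span {x : N | ∃ a ∈ I, x = q • a}

/-- The set of units of a binoid. -/
def unitSet (N : Type*) [Binoid N] : Set N := {a : N | ∃ b : N, a + b = 0}

/-- `N₊`, the set (ideal) of non-units of a binoid. -/
def plusSet (N : Type*) [Binoid N] : Set N := (unitSet N)ᶜ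

/-- A binoid is semipositive if its unit group is finite. -/
def Semipositive (N : Type*) [Binoid N] : Prop := (unitSet N).Finite

/-- A binoid is positive if `0` is its only unit. -/
def Positive (N : Type*) [Binoid N] : Prop := unitSet N = {0}

/-- A binoid is finitely generated if it is generated, as a (commutative) monoid,
by finitely many elements. -/
def FG (N : Type*) [Binoid N] : Prop :=
  ∃ s : Finset N, AddSubmonoid.closure (s : Set N) = ⊤

/-- A binoid is cancellative if `a + c = b + c` with `c ≠ ∞` implies `a = b`. -/
def Cancellative (N : Type*) [Binoid N] : Prop :=
  ∀ a b c : N, c ≠ infty → a + c = b + c → a = b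

/-- A binoid is reduced if `∞` is its only nilpotent element. -/
def Reduced (N : Type*) [Binoid N] : Prop :=
  ∀ (a : N) (n : ℕ), 0 < n → n • a = (infty : N) → a = infty

/-- A binoid is torsion-free if `n • a = n • b` for some `n ≥ 1` implies `a = b`. -/
def TorsionFree (N : Type*) [Binoid N] : Prop :=
  ∀ (a b : N) (n : ℕ), 0 < n → n • a = n • b → a = b

/-- A binoid is integral if `N ∖ {∞}` is a submonoid. -/
def Integral (N : Type*) [Binoid N] : Prop :=
  (0 : N) ≠ infty ∧ ∀ a b : N, a + b = (infty : N) → a = infty ∨ b = infty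

/-- The radical of an ideal of a binoid. -/
def rad (I : Set N) : Set N := {a : N | ∃ k : ℕ, 0 < k ∧ k • a ∈ I}

/-- An `N₊`-primary ideal: an ideal whose radical is `N₊`. -/
def IsPrimaryIdeal (I : Set N) : Prop := IsIdeal I ∧ rad I = plusSet N

/-- A prime ideal of a binoid: a proper ideal whose complement is closed under addition. -/
def IsPrime (I : Set N) : Prop :=
  IsIdeal I ∧ I ≠ Set.univ ∧ ∀ a b : N, a ∉ I → b ∉ I → a + b ∉ I

/-- A minimal prime ideal of a binoid. -/
def IsMinimalPrime (I : Set N) : Prop :=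
  IsPrime I ∧ ∀ J : Set N, IsPrime J → J ⊆ I → J = I

/-- The set of lengths of strictly increasing chains of prime ideals of `N`. -/
def dimSet (N : Type*) [Binoid N] : Set ℕ :=
  {n : ℕ | ∃ c : Fin (n + 1) → Set N, (∀ i, IsPrime (c i)) ∧ StrictMono c}

/-- The combinatorial dimension of a binoid: the supremum of the lengths of strictly
increasing chains of prime ideals. -/
noncomputable def dim (N : Type*) [Binoid N] : ℕ := sSup (dimSet N)

/-- `#(N/[q]𝔫)`: the number of elements of the binoid `N/[q]𝔫`, not counting `∞`;
equivalently, the number of elements of `N` outside of the ideal `[q]𝔫`. -/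
noncomputable def hkOn (I : Set N) (q : ℕ) : ℕ := Set.ncard ((frob q I)ᶜ)

/-- The Hilbert–Kunz multiplicity of an (`N₊`-primary) ideal `𝔫` on `N` is `L`:
the limit of `#(N/[q]𝔫)/q^(dim N)` as `q → ∞` is `L`. -/
def IsHKMultOn (I : Set N) (L : ℝ) : Prop :=
  Filter.Tendsto (fun q : ℕ => (hkOn I q : ℝ) / (q : ℝ) ^ dim N) Filter.atTop (nhds L)

/-- The Hilbert–Kunz multiplicity of the binoid `N` is `L`. -/
def IsHKMult (N : Type*) [Binoid N] (L : ℝ) : Prop :=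
  IsHKMultOn (plusSet N) L

/-- The sum `I + J` of two subsets of a binoid. -/
def idealSum (I J : Set N) : Set N := {x : N | ∃ a ∈ I, ∃ b ∈ J, x = a + b}


/-- The additive congruence on `N` contracting the subset `I` to a point.
(When `I` is an ideal, the relation below is already a congruence.) -/
def quotCon (I : Set N) : AddCon N :=
  addConGen (fun a b => a = b ∨ (a ∈ I ∧ b ∈ I))

/-- The residue class binoid `N/I`, obtained by contracting the ideal `I` to `∞`. -/
def BQuot (I : Set N) : Type _ := (quotCon I).Quotient

instance (I : Set N) : AddCommMonoid (BQuot I) :=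
  inferInstanceAs (AddCommMonoid (quotCon I).Quotient)

/-- The canonical projection `N → N/I`. -/
def BQuot.mk (I : Set N) (a : N) : BQuot I := (a : (quotCon I).Quotient)

instance (I : Set N) : Binoid (BQuot I) :=
  { (inferInstance : AddCommMonoid (BQuot I)) with
    infty := BQuot.mk I infty
    add_infty := fun x => AddCon.induction_on x fun a => by
      show BQuot.mk I a + BQuot.mk I infty = BQuot.mk I infty
      show ((a + infty : N) : (quotCon I).Quotient) = ((infty : N) : (quotCon I).Quotient)
      rw [add_infty] }

/-- The product of two binoids (with componentwise addition). -/
instance {M P : Type*} [Binoid M] [Binoid P] : Binoid (M × P) :=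
  { (inferInstance : AddCommMonoid (M × P)) with
    infty := ((infty : M), (infty : P))
    add_infty := fun x => by
      show (x.1 + infty, x.2 + infty) = ((infty : M), (infty : P))
      rw [add_infty, add_infty] }

/-- The ideal of `M × P` consisting of pairs one of whose coordinates is `∞`. -/
def smashIdeal (M P : Type*) [Binoid M] [Binoid P] : Set (M × P) :=
  {x : M × P | x.1 = infty ∨ x.2 = infty}

/-- The smash product `M ∧ P` of two binoids. -/
def Smash (M P : Type*) [Binoid M] [Binoid P] : Type _ :=
  BQuot (smashIdeal M P)

instance {M P : Type*} [Binoid M] [Binoid P] : AddCommMonoid (Smash M P) :=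
  inferInstanceAs (AddCommMonoid (BQuot (smashIdeal M P)))

instance {M P : Type*} [Binoid M] [Binoid P] : Binoid (Smash M P) :=
  inferInstanceAs (Binoid (BQuot (smashIdeal M P)))

/-- The class of `(m, p)` in the smash product `M ∧ P`. -/
def Smash.mk {M P : Type*} [Binoid M] [Binoid P] (m : M) (p : P) : Smash M P :=
  BQuot.mk (smashIdeal M P) (m, p)


end Binoid

open Binoid

section Aux

variable {M N : Type*} [Binoid M] [Binoid N]

/-- The relation contracting an ideal to a point is already a congruence. -/
def idealCon (I : Set M) (hI : IsIdeal I) : AddCon M where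
  r a b := a = b ∨ (a ∈ I ∧ b ∈ I)
  iseqv := ⟨fun _ => Or.inl rfl,
    fun h => h.elim (fun e => Or.inl e.symm) (fun h => Or.inr ⟨h.2, h.1⟩),
    fun h1 h2 => by
      rcases h1 with rfl | h1
      · exact h2
      · rcases h2 with rfl | h2
        · exact Or.inr h1
        · exact Or.inr ⟨h1.1, h2.2⟩⟩
  add' := by
    rintro w x y z (rfl | h1) (rfl | h2)
    · exact Or.inl rfl
    · exact Or.inr ⟨hI.2 _ h2.1 _, hI.2 _ h2.2 _⟩
    · exact Or.inr ⟨by rw [add_comm]; exact hI.2 _ h1.1 _, by rw [add_comm]; exact hI.2 _ h1.2 _⟩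
    · exact Or.inr ⟨hI.2 _ h2.1 _, hI.2 _ h2.2 _⟩

theorem quotCon_eq (I : Set M) (hI : IsIdeal I) : quotCon I = idealCon I hI := by
  refine le_antisymm (AddCon.addConGen_le.2 fun x y h => h) fun a b h => ?_
  exact AddConGen.Rel.of a b h

theorem mk_eq_mk {I : Set M} (hI : IsIdeal I) {a b : M} :
    BQuot.mk I a = BQuot.mk I b ↔ (a = b ∨ (a ∈ I ∧ b ∈ I)) := by
  show ((a : (quotCon I).Quotient) = b) ↔ _
  rw [AddCon.eq, quotCon_eq I hI]
  exact Iff.rfl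

theorem mk_add (I : Set M) (a b : M) :
    BQuot.mk I (a + b) = BQuot.mk I a + BQuot.mk I b := rfl

theorem mk_zero (I : Set M) : BQuot.mk I 0 = 0 := rfl

theorem mk_nsmul (I : Set M) (q : ℕ) (a : M) :
    BQuot.mk I (q • a) = q • BQuot.mk I a := by
  induction q with
  | zero => simp [mk_zero]
  | succ n ih => rw [succ_nsmul, succ_nsmul, mk_add, ih]

theorem nsmul_pair {A B : Type*} [AddMonoid A] [AddMonoid B] (q : ℕ) (a : A) (b : B) :
    q • ((a, b) : A × B) = (q • a, q • b) := by
  induction q with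
  | zero => simp; rfl
  | succ n ih => rw [succ_nsmul, succ_nsmul, succ_nsmul, ih, Prod.mk_add_mk]

theorem isIdeal_smashIdeal : IsIdeal (smashIdeal M N) :=
  ⟨Or.inl rfl, fun a ha n => ha.imp
    (fun h => show n.1 + a.1 = _ by rw [h, add_infty])
    (fun h => show n.2 + a.2 = _ by rw [h, add_infty])⟩

theorem infty_mem_frob (q : ℕ) (I : Set M) : (infty : M) ∈ frob q I :=
  Set.mem_insert _ _

theorem mem_frob_of (q : ℕ) {I : Set M} {s : M} (hs : s ∈ I) (n : M) :
    n + q • s ∈ frob q I :=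
  Or.inr ⟨n, q • s, ⟨s, hs, rfl⟩, rfl⟩

theorem smash_mk_add (a c : M) (b d : N) :
    Smash.mk a b + Smash.mk c d = Smash.mk (a + c) (b + d) := rfl

theorem smash_mk_nsmul (q : ℕ) (a : M) (b : N) :
    q • Smash.mk a b = Smash.mk (q • a) (q • b) := by
  show q • BQuot.mk _ ((a, b) : M × N) = BQuot.mk _ ((q • a, q • b) : M × N)
  rw [← mk_nsmul, nsmul_pair]

theorem smash_mk_eq_mk {a c : M} {b d : N} :
    Smash.mk a b = Smash.mk c d ↔
      ((a, b) = (c, d) ∨ ((a, b) ∈ smashIdeal M N ∧ (c, d) ∈ smashIdeal M N)) :=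
  mk_eq_mk isIdeal_smashIdeal

theorem smash_infty : (infty : Smash M N) = Smash.mk (infty : M) (infty : N) := rfl

theorem smash_surj (x : Smash M N) : ∃ a b, Smash.mk a b = x :=
  AddCon.induction_on x fun p => ⟨p.1, p.2, rfl⟩

theorem smash_mk_zero : (Smash.mk (0 : M) (0 : N)) = 0 := rfl

theorem smash_unit_iff (h0M : (0 : M) ≠ infty) (h0N : (0 : N) ≠ infty) (s : M) (t : N) :
    Smash.mk s t ∈ unitSet (Smash M N) ↔ s ∈ unitSet M ∧ t ∈ unitSet N := by
  constructor
  · rintro ⟨c, hc⟩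
    obtain ⟨m, p, rfl⟩ := smash_surj c
    rw [smash_mk_add, ← smash_mk_zero, smash_mk_eq_mk] at hc
    rcases hc with hc | hc
    · rw [Prod.mk.injEq] at hc
      exact ⟨⟨m, hc.1⟩, ⟨p, hc.2⟩⟩
    · rcases hc.2 with h | h
      · exact (h0M h).elim
      · exact (h0N h).elim
  · rintro ⟨⟨m, hm⟩, ⟨p, hp⟩⟩
    exact ⟨Smash.mk m p, by rw [smash_mk_add, hm, hp, smash_mk_zero]⟩

theorem smash_mem_frob_iff (h0M : (0 : M) ≠ infty) (h0N : (0 : N) ≠ infty) (q : ℕ) (a : M)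
    (b : N) :
    Smash.mk a b ∈ frob q (plusSet (Smash M N)) ↔
      a ∈ frob q (plusSet M) ∨ b ∈ frob q (plusSet N) := by
  constructor
  · rintro (h | ⟨n, x, ⟨c, hc, rfl⟩, hx⟩)
    · rw [smash_infty, smash_mk_eq_mk] at h
      rcases h with h | h
      · rw [Prod.mk.injEq] at h
        exact Or.inl (h.1 ▸ infty_mem_frob q _)
      · rcases h.1 with e | e
        · exact Or.inl (by rw [show a = infty from e]; exact infty_mem_frob q _)
        · exact Or.inr (by rw [show b = infty from e]; exact infty_mem_frob q _)
    · obtain ⟨m, p, rfl⟩ := smash_surj n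
      obtain ⟨s, t, rfl⟩ := smash_surj c
      rw [smash_mk_nsmul, smash_mk_add, smash_mk_eq_mk] at hx
      rcases hx with hx | hx
      · rw [Prod.mk.injEq] at hx
        have hst : s ∈ plusSet M ∨ t ∈ plusSet N := by
          by_contra hcon
          push_neg at hcon
          simp only [plusSet, Set.mem_compl_iff, not_not] at hcon
          exact hc ((smash_unit_iff h0M h0N s t).2 hcon)
        exact hst.imp (fun hs => hx.1 ▸ mem_frob_of q hs m) (fun ht => hx.2 ▸ mem_frob_of q ht p)
      · rcases hx.1 with e | e
        · exact Or.inl (by rw [show a = infty from e]; exact infty_mem_frob q _)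
        · exact Or.inr (by rw [show b = infty from e]; exact infty_mem_frob q _)
  · have key : ∀ (a : M) (b : N), a ∈ frob q (plusSet M) →
        Smash.mk a b ∈ frob q (plusSet (Smash M N)) := by
      rintro a b (rfl | ⟨m, x, ⟨s, hs, rfl⟩, rfl⟩)
      · refine Set.mem_of_eq_of_mem ?_ (infty_mem_frob q _)
        rw [smash_infty, smash_mk_eq_mk]
        exact Or.inr ⟨Or.inl rfl, Or.inl rfl⟩
      · have hs' : Smash.mk s (0 : N) ∈ plusSet (Smash M N) := by
          intro hu
          exact hs ((smash_unit_iff h0M h0N s 0).1 hu).1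
        have : Smash.mk (m + q • s) b = Smash.mk m b + q • Smash.mk s (0 : N) := by
          rw [smash_mk_nsmul, smash_mk_add, smul_zero, add_zero]
        exact Set.mem_of_eq_of_mem this (mem_frob_of q hs' (Smash.mk m b))
    have key2 : ∀ (a : M) (b : N), b ∈ frob q (plusSet N) →
        Smash.mk a b ∈ frob q (plusSet (Smash M N)) := by
      rintro a b (rfl | ⟨m, x, ⟨s, hs, rfl⟩, rfl⟩)
      · refine Set.mem_of_eq_of_mem ?_ (infty_mem_frob q _)
        rw [smash_infty, smash_mk_eq_mk]
        exact Or.inr ⟨Or.inr rfl, Or.inl rfl⟩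
      · have hs' : Smash.mk (0 : M) s ∈ plusSet (Smash M N) := by
          intro hu
          exact hs ((smash_unit_iff h0M h0N 0 s).1 hu).2
        have : Smash.mk a (m + q • s) = Smash.mk a m + q • Smash.mk (0 : M) s := by
          rw [smash_mk_nsmul, smash_mk_add, smul_zero, add_zero]
        exact Set.mem_of_eq_of_mem this (mem_frob_of q hs' (Smash.mk a m))
    rintro (h | h)
    · exact key a b h
    · exact key2 a b h

theorem degenerate_all_infty (h0 : (0 : M) = infty) (a : M) : a = infty := by
  calc a = a + 0 := (add_zero a).symm
  _ = a + infty := by rw [h0]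
  _ = infty := add_infty a

end Aux

/-- **Statement 7.** Let `M` and `N` be finitely generated, semipositive binoids. Then for
every positive integer `q`, `#((M∧N)/[q](M∧N)₊) = #(M/[q]M₊) · #(N/[q]N₊)`. -/
theorem hkf_smash
    {M N : Type*} [Binoid M] [Binoid N]
    (hfgM : FG M) (hspM : Semipositive M) (hfgN : FG N) (hspN : Semipositive N) :
    ∀ q : ℕ, 0 < q →
      hkOn (plusSet (Smash M N)) q = hkOn (plusSet M) q * hkOn (plusSet N) q := by
  intro q _
  by_cases h0M : (0 : M) = infty
  · have hM : hkOn (plusSet M) q = 0 := by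
      have : (frob q (plusSet M))ᶜ = (∅ : Set M) := by
        rw [Set.compl_empty_iff]
        refine Set.eq_univ_of_forall fun a => ?_
        rw [degenerate_all_infty h0M a]
        exact infty_mem_frob q _
      rw [hkOn, this, Set.ncard_empty]
    have hS : hkOn (plusSet (Smash M N)) q = 0 := by
      have : (frob q (plusSet (Smash M N)))ᶜ = (∅ : Set (Smash M N)) := by
        rw [Set.compl_empty_iff]
        refine Set.eq_univ_of_forall fun x => ?_
        obtain ⟨a, b, rfl⟩ := smash_surj x
        have : Smash.mk a b = (infty : Smash M N) := by
          rw [smash_infty, smash_mk_eq_mk]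
          exact Or.inr ⟨Or.inl (degenerate_all_infty h0M a), Or.inl rfl⟩
        rw [this]
        exact infty_mem_frob q _
      rw [hkOn, this, Set.ncard_empty]
    rw [hS, hM, zero_mul]
  by_cases h0N : (0 : N) = infty
  · have hN : hkOn (plusSet N) q = 0 := by
      have : (frob q (plusSet N))ᶜ = (∅ : Set N) := by
        rw [Set.compl_empty_iff]
        refine Set.eq_univ_of_forall fun a => ?_
        rw [degenerate_all_infty h0N a]
        exact infty_mem_frob q _
      rw [hkOn, this, Set.ncard_empty]
    have hS : hkOn (plusSet (Smash M N)) q = 0 := by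
      have : (frob q (plusSet (Smash M N)))ᶜ = (∅ : Set (Smash M N)) := by
        rw [Set.compl_empty_iff]
        refine Set.eq_univ_of_forall fun x => ?_
        obtain ⟨a, b, rfl⟩ := smash_surj x
        have : Smash.mk a b = (infty : Smash M N) := by
          rw [smash_infty, smash_mk_eq_mk]
          exact Or.inr ⟨Or.inr (degenerate_all_infty h0N b), Or.inl rfl⟩
        rw [this]
        exact infty_mem_frob q _
      rw [hkOn, this, Set.ncard_empty]
    rw [hS, hN, mul_zero]
  -- main case
  set A : Set M := (frob q (plusSet M))ᶜ with hA
  set B : Set N := (frob q (plusSet N))ᶜ with hB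
  set C : Set (Smash M N) := (frob q (plusSet (Smash M N)))ᶜ with hC
  have hf : ∀ x : ↥A × ↥B, Smash.mk x.1.1 x.2.1 ∈ C := by
    rintro ⟨⟨a, ha⟩, ⟨b, hb⟩⟩
    simp only [hC, Set.mem_compl_iff]
    rw [smash_mem_frob_iff h0M h0N]
    rintro (h | h)
    · exact ha h
    · exact hb h
  let f : ↥A × ↥B → ↥C := fun x => ⟨Smash.mk x.1.1 x.2.1, hf x⟩
  have hbij : Function.Bijective f := by
    constructor
    · rintro ⟨⟨a, ha⟩, ⟨b, hb⟩⟩ ⟨⟨a', ha'⟩, ⟨b', hb'⟩⟩ h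
      have h' : Smash.mk a b = Smash.mk a' b' := congrArg Subtype.val h
      rw [smash_mk_eq_mk] at h'
      rcases h' with h' | h'
      · rw [Prod.mk.injEq] at h'
        simp only [Prod.mk.injEq, Subtype.mk.injEq]
        exact ⟨h'.1, h'.2⟩
      · exfalso
        rcases h'.1 with e | e
        · exact ha (by rw [show a = infty from e]; exact infty_mem_frob q _)
        · exact hb (by rw [show b = infty from e]; exact infty_mem_frob q _)
    · rintro ⟨c, hc⟩
      obtain ⟨a, b, rfl⟩ := smash_surj c
      rw [hC, Set.mem_compl_iff, smash_mem_frob_iff h0M h0N] at hc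
      push_neg at hc
      exact ⟨(⟨a, hc.1⟩, ⟨b, hc.2⟩), rfl⟩
  have := Nat.card_congr (Equiv.ofBijective f hbij)
  rw [Nat.card_prod, Nat.card_coe_set_eq, Nat.card_coe_set_eq,
    Nat.card_coe_set_eq] at this
  exact this.symm
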